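/- Let K/ℚ be Galois with Galois group G of order n, let η ∈ K^× have multiplicatively independent conjugates, let H = ⟨s⟩ be a cyclic subgroup of G generated by an element s, and let f(X) ∈ ℤ[X] be a polynomial such that the evaluation f(s) is nonzero in the group ring ℤ[H]. Then there exists a bound B such that for every prime number p > B that is unramified in K/ℚ and prime to η, for every prime ideal 𝔭 of K above p whose Frobenius equals s, and for every root of unity ζ ∈ μ(K), one has η^{f(p)} ≢ ζ (mod 𝔭). -/

import Mathlib

open NumberField Polynomial
set_option synthInstance.maxHeartbeats 1000000
set_option maxHeartbeats 4000000

/-- `x ≡ y (mod I)` for `x : K`, `y : 𝓞 K`: `x` can be written as a fraction `a/b`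
with `b` invertible mod `I` and `a ≡ y·b (mod I)`. -/
def CongMod (K : Type) [Field K] [NumberField K] (I : Ideal (𝓞 K)) (x : K) (y : 𝓞 K) : Prop :=
  ∃ a b : 𝓞 K, IsUnit (Ideal.Quotient.mk I b) ∧
    algebraMap (𝓞 K) K a = x * algebraMap (𝓞 K) K b ∧
    Ideal.Quotient.mk I a = Ideal.Quotient.mk I (y * b)

/-- `η ∈ K^×` is a unit at every prime of `K` above `p`:
it is a quotient of two integers of `K` that are invertible modulo `p`. -/
def PrimeTo (K : Type) [Field K] [NumberField K] (p : ℕ) (η : K) : Prop :=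
  ∃ a b : 𝓞 K,
    IsUnit (Ideal.Quotient.mk (Ideal.span {(p : 𝓞 K)}) a) ∧
    IsUnit (Ideal.Quotient.mk (Ideal.span {(p : 𝓞 K)}) b) ∧
    algebraMap (𝓞 K) K a = η * algebraMap (𝓞 K) K b

/-- The set of integers `k ≥ 1` with `η^k ≡ 1 (mod I)`; its least element
is the order of `η` modulo `I`. -/
def OrderSet (K : Type) [Field K] [NumberField K] (I : Ideal (𝓞 K)) (η : K) : Set ℕ :=
  {k : ℕ | 0 < k ∧ CongMod K I (η ^ k) 1}

/-- `s` is the Frobenius of `𝔭` over `p`: `s x ≡ x^p (mod 𝔭)` for every integer `x` of `K`. -/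
def IsFrob (K : Type) [Field K] [NumberField K] (p : ℕ)
    (𝔭 : Ideal (𝓞 K)) (s : K ≃ₐ[ℚ] K) : Prop :=
  ∀ x : 𝓞 K, galRestrict ℤ ℚ K (𝓞 K) s x - x ^ p ∈ 𝔭

section Aux
variable {K : Type} [Field K] [NumberField K]

/-- reduction relation: `x` is `𝔭`-integral with reduction `u`. -/
def Red (𝔭 : Ideal (𝓞 K)) (x : K) (u : 𝓞 K ⧸ 𝔭) : Prop :=
  ∃ a b : 𝓞 K, IsUnit (Ideal.Quotient.mk 𝔭 b) ∧
    algebraMap (𝓞 K) K a = x * algebraMap (𝓞 K) K b ∧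
    Ideal.Quotient.mk 𝔭 a = u * Ideal.Quotient.mk 𝔭 b

variable {𝔭 : Ideal (𝓞 K)}

lemma iotainj : Function.Injective (algebraMap (𝓞 K) K) :=
  IsFractionRing.injective (𝓞 K) K

lemma congMod_iff_red {x : K} {y : 𝓞 K} :
    CongMod K 𝔭 x y ↔ Red 𝔭 x (Ideal.Quotient.mk 𝔭 y) := by
  unfold CongMod Red
  simp only [map_mul]

lemma red_unique {x : K} {u v : 𝓞 K ⧸ 𝔭} (hu : Red 𝔭 x u) (hv : Red 𝔭 x v) : u = v := by
  obtain ⟨a, b, hb, hab, hre⟩ := hu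
  obtain ⟨a', b', hb', hab', hre'⟩ := hv
  have h1 : a * b' = a' * b := by
    apply iotainj
    rw [map_mul, map_mul, hab, hab']; ring
  have h2 := congrArg (Ideal.Quotient.mk 𝔭) h1
  rw [map_mul, map_mul, hre, hre'] at h2
  have h3 : (Ideal.Quotient.mk 𝔭 b * Ideal.Quotient.mk 𝔭 b') * u
      = (Ideal.Quotient.mk 𝔭 b * Ideal.Quotient.mk 𝔭 b') * v := by
    linear_combination h2
  exact (hb.mul hb').mul_left_cancel h3

lemma red_one : Red 𝔭 (1 : K) 1 :=
  ⟨1, 1, by simpa using isUnit_one, by simp, by simp⟩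

lemma red_mul {x y : K} {u v : 𝓞 K ⧸ 𝔭} (hx : Red 𝔭 x u) (hy : Red 𝔭 y v) :
    Red 𝔭 (x * y) (u * v) := by
  obtain ⟨a, b, hb, hab, hre⟩ := hx
  obtain ⟨a', b', hb', hab', hre'⟩ := hy
  refine ⟨a * a', b * b', by simpa [map_mul] using hb.mul hb', ?_, ?_⟩
  · rw [map_mul, map_mul, hab, hab']; ring
  · rw [map_mul, map_mul, hre, hre']; ring

lemma red_pow {x : K} {u : 𝓞 K ⧸ 𝔭} (hx : Red 𝔭 x u) (k : ℕ) :
    Red 𝔭 (x ^ k) (u ^ k) := by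
  induction k with
  | zero => simpa using red_one
  | succ k ih => rw [pow_succ, pow_succ]; exact red_mul ih hx

lemma red_prod {ι : Type*} (t : Finset ι) (x : ι → K) (u : ι → 𝓞 K ⧸ 𝔭)
    (h : ∀ i ∈ t, Red 𝔭 (x i) (u i)) :
    Red 𝔭 (∏ i ∈ t, x i) (∏ i ∈ t, u i) := by
  classical
  induction t using Finset.induction_on with
  | empty => simpa using red_one
  | insert _ _ hni ih =>
    rw [Finset.prod_insert hni, Finset.prod_insert hni]
    exact red_mul (h _ (Finset.mem_insert_self _ _))
      (ih fun i hi => h i (Finset.mem_insert_of_mem hi))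

lemma red_inv (hnt : 𝔭 ≠ ⊤) {x : K} (w : (𝓞 K ⧸ 𝔭)ˣ) (h : Red 𝔭 x ↑w) :
    Red 𝔭 x⁻¹ ↑w⁻¹ := by
  haveI : Nontrivial (𝓞 K ⧸ 𝔭) := Ideal.Quotient.nontrivial_iff.mpr hnt
  obtain ⟨a, b, hb, hab, hre⟩ := h
  have ha : IsUnit (Ideal.Quotient.mk 𝔭 a) := by
    rw [hre]; exact (Units.isUnit w).mul hb
  have hx : x ≠ 0 := by
    rintro rfl
    have : a = 0 := iotainj (by simpa using hab)
    rw [this, map_zero] at ha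
    exact zero_ne_one (isUnit_zero_iff.mp ha)
  refine ⟨b, a, ha, ?_, ?_⟩
  · rw [hab]; field_simp
  · have := congrArg (fun t => (↑w⁻¹ : 𝓞 K ⧸ 𝔭) * t) hre
    rw [this, ← mul_assoc]
    norm_cast
    rw [inv_mul_cancel]
    simp

lemma red_zpow (hnt : 𝔭 ≠ ⊤) {x : K} (w : (𝓞 K ⧸ 𝔭)ˣ) (h : Red 𝔭 x ↑w) (z : ℤ) :
    Red 𝔭 (x ^ z) ↑(w ^ z) := by
  cases z with
  | ofNat k =>
    simpa [zpow_natCast] using red_pow h k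
  | negSucc k =>
    rw [zpow_negSucc, zpow_negSucc]
    simpa [Units.val_pow_eq_pow_val] using
      red_inv hnt (w ^ (k + 1)) (by simpa [Units.val_pow_eq_pow_val] using red_pow h (k + 1))

lemma red_frob {p : ℕ} {s : K ≃ₐ[ℚ] K} (hF : IsFrob K p 𝔭 s)
    {x : K} {u : 𝓞 K ⧸ 𝔭} (h : Red 𝔭 x u) : Red 𝔭 (s x) (u ^ p) := by
  obtain ⟨a, b, hb, hab, hre⟩ := h
  have key : ∀ c : 𝓞 K, Ideal.Quotient.mk 𝔭 (galRestrict ℤ ℚ K (𝓞 K) s c)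
      = (Ideal.Quotient.mk 𝔭 c) ^ p := by
    intro c
    rw [← map_pow]
    exact Ideal.Quotient.eq.mpr (hF c)
  refine ⟨galRestrict ℤ ℚ K (𝓞 K) s a, galRestrict ℤ ℚ K (𝓞 K) s b, ?_, ?_, ?_⟩
  · rw [key]; exact hb.pow p
  · rw [algebraMap_galRestrict_apply, algebraMap_galRestrict_apply, hab, map_mul]
  · rw [key, key, hre, mul_pow]

lemma prod_zpow_eq {ι : Type*} (x : K) (hx : x ≠ 0) (t : Finset ι) (g : ι → ℤ) :
    ∏ i ∈ t, x ^ g i = x ^ (∑ i ∈ t, g i) := by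
  classical
  induction t using Finset.induction_on with
  | empty => simp
  | insert _ _ hni ih =>
    rw [Finset.prod_insert hni, Finset.sum_insert hni, zpow_add₀ hx, ih]

end Aux

section Main
variable {K : Type} [Field K] [NumberField K]

lemma alpha_pow_ne_one (η : K) (hη0 : η ≠ 0)
    (hind : ∀ e : (K ≃ₐ[ℚ] K) → ℤ,
      (∏ σ : K ≃ₐ[ℚ] K, σ η ^ e σ) = 1 → ∀ σ, e σ = 0)
    (s : K ≃ₐ[ℚ] K) (f : Polynomial ℤ)
    (hf : Polynomial.aeval (MonoidAlgebra.of ℤ (K ≃ₐ[ℚ] K) s) f ≠ 0)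
    (M : ℕ) (hM : M ≠ 0) :
    (∏ i ∈ f.support, ((s ^ i : K ≃ₐ[ℚ] K) η) ^ f.coeff i) ^ M ≠ 1 := by
  classical
  intro hone
  have hση : ∀ σ : K ≃ₐ[ℚ] K, σ η ≠ 0 := fun σ h =>
    hη0 (by simpa using σ.injective (h.trans (map_zero (σ : K ≃ₐ[ℚ] K)).symm))
  set e : (K ≃ₐ[ℚ] K) → ℤ := fun σ => ∑ i ∈ f.support.filter (fun i => s ^ i = σ), f.coeff i * M
    with he
  have key : (∏ σ : K ≃ₐ[ℚ] K, σ η ^ e σ) = 1 := by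
    have h1 : ∀ σ : K ≃ₐ[ℚ] K, σ η ^ e σ
        = ∏ i ∈ f.support.filter (fun i => s ^ i = σ), ((s ^ i : K ≃ₐ[ℚ] K) η) ^ (f.coeff i * M) := by
      intro σ
      rw [he, ← prod_zpow_eq _ (hση σ)]
      refine (Finset.prod_congr rfl ?_)
      intro i hi
      rw [(Finset.mem_filter.mp hi).2]
    calc (∏ σ : K ≃ₐ[ℚ] K, σ η ^ e σ)
        = ∏ σ : K ≃ₐ[ℚ] K, ∏ i ∈ f.support.filter (fun i => s ^ i = σ),
            ((s ^ i : K ≃ₐ[ℚ] K) η) ^ (f.coeff i * M) := Finset.prod_congr rfl fun σ _ => h1 σ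
      _ = ∏ i ∈ f.support, ((s ^ i : K ≃ₐ[ℚ] K) η) ^ (f.coeff i * M) :=
          Finset.prod_fiberwise_of_maps_to (fun i _ => Finset.mem_univ _) _
      _ = ∏ i ∈ f.support, (((s ^ i : K ≃ₐ[ℚ] K) η) ^ f.coeff i) ^ (M : ℤ) := by
          refine Finset.prod_congr rfl fun i _ => ?_
          rw [← zpow_mul]
      _ = (∏ i ∈ f.support, ((s ^ i : K ≃ₐ[ℚ] K) η) ^ f.coeff i) ^ (M : ℤ) := by
          rw [Finset.prod_zpow]
      _ = 1 := by rw [zpow_natCast, hone]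
  have he0 := hind e key
  have hsum : ∀ σ : K ≃ₐ[ℚ] K, (∑ i ∈ f.support.filter (fun i => s ^ i = σ), f.coeff i) = 0 := by
    intro σ
    have := he0 σ
    rw [he] at this
    simp only at this
    rw [← Finset.sum_mul] at this
    have hMz : (M : ℤ) ≠ 0 := Int.natCast_ne_zero.mpr hM
    exact (mul_eq_zero.mp this).resolve_right hMz
  apply hf
  have heq : Polynomial.aeval (MonoidAlgebra.of ℤ (K ≃ₐ[ℚ] K) s) f
      = ∑ i ∈ f.support, MonoidAlgebra.single (s ^ i) (f.coeff i) := by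
    rw [Polynomial.aeval_def, Polynomial.eval₂_eq_sum, Polynomial.sum_def]
    refine Finset.sum_congr rfl fun i _ => ?_
    rw [← map_pow]
    rw [MonoidAlgebra.coe_algebraMap]
    show MonoidAlgebra.single 1 (f.coeff i) * MonoidAlgebra.single (s ^ i) 1 = _
    rw [MonoidAlgebra.single_mul_single, one_mul, mul_one]
  rw [heq]
  ext σ
  rw [MonoidAlgebra.coeff_sum, Finsupp.finset_sum_apply]
  simp only [MonoidAlgebra.coeff_single, Finsupp.single_apply]
  rw [← Finset.sum_filter]
  rw [hsum σ]
  simp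

end Main

section Main2
variable {K : Type} [Field K] [NumberField K]

lemma prod_zpow_group {G : Type*} [CommGroup G] {ι : Type*} (w : G) (t : Finset ι) (g : ι → ℤ) :
    ∏ i ∈ t, w ^ g i = w ^ (∑ i ∈ t, g i) := by
  classical
  induction t using Finset.induction_on with
  | empty => simp
  | insert _ _ hni ih => rw [Finset.prod_insert hni, Finset.sum_insert hni, zpow_add, ih]

lemma zeta_pow_torsionOrder (ζ : 𝓞 K) (h : ∃ m : ℕ, 0 < m ∧ ζ ^ m = 1) :
    ζ ^ ((NumberField.Units.torsionOrder K : ℕ)) = 1 := by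
  obtain ⟨m, hm, h1⟩ := h
  have hu : IsUnit ζ := IsUnit.of_pow_eq_one h1 hm.ne'
  have hum : hu.unit ^ m = 1 :=
    Units.ext (by simp [Units.val_pow_eq_pow_val, hu.unit_spec, h1])
  have hfin : IsOfFinOrder hu.unit := isOfFinOrder_iff_pow_eq_one.mpr ⟨m, hm, hum⟩
  have hmem : hu.unit ∈ NumberField.Units.torsion K := hfin
  have hpow := pow_card_eq_one' (G := NumberField.Units.torsion K) (x := ⟨hu.unit, hmem⟩)
  have : (⟨hu.unit, hmem⟩ : NumberField.Units.torsion K) ^ ((NumberField.Units.torsionOrder K : ℕ)) = 1 := by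
    exact hpow
  have h2 : hu.unit ^ ((NumberField.Units.torsionOrder K : ℕ)) = 1 := by
    have := congrArg Subtype.val this
    simpa [SubmonoidClass.coe_pow] using this
  have h3 := congrArg Units.val h2
  simpa [Units.val_pow_eq_pow_val, hu.unit_spec] using h3

end Main2

/-- if `f(s) ≠ 0` in the group ring, then for all `p ≫ 0` of Frobenius `s` at `𝔭`,
`η^{f(p)} ≢ ζ (mod 𝔭)` for every root of unity `ζ` of `K`. -/
theorem statement_0
    (K : Type) [Field K] [NumberField K] [IsGalois ℚ K] (n : ℕ)
    (hn : Nat.card (K ≃ₐ[ℚ] K) = n)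
    (η : K) (hη0 : η ≠ 0)
    (hind : ∀ e : (K ≃ₐ[ℚ] K) → ℤ,
      (∏ σ : K ≃ₐ[ℚ] K, σ η ^ e σ) = 1 → ∀ σ, e σ = 0)
    (s : K ≃ₐ[ℚ] K) (f : Polynomial ℤ)
    (hf : Polynomial.aeval (MonoidAlgebra.of ℤ (K ≃ₐ[ℚ] K) s) f ≠ 0) :
    ∃ B : ℕ, ∀ p : ℕ, p.Prime → B < p →
      Squarefree (Ideal.span {(p : 𝓞 K)}) →
      PrimeTo K p η →
      ∀ 𝔭 : Ideal (𝓞 K), 𝔭.IsPrime → (p : 𝓞 K) ∈ 𝔭 →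
        IsFrob K p 𝔭 s →
        ∀ ζ : 𝓞 K, (∃ m : ℕ, 0 < m ∧ ζ ^ m = 1) →
          ¬ CongMod K 𝔭 (η ^ (f.eval (p : ℤ))) ζ := by
  classical
  set α : K := ∏ i ∈ f.support, ((s ^ i : K ≃ₐ[ℚ] K) η) ^ f.coeff i with hαdef
  set M : ℕ := (NumberField.Units.torsionOrder K : ℕ) with hMdef
  have hM0 : M ≠ 0 := NumberField.Units.torsionOrder_ne_zero K
  have hβ : α ^ M - 1 ≠ 0 :=
    sub_ne_zero.mpr (alpha_pow_ne_one η hη0 hind s f hf M hM0)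
  obtain ⟨⟨g, d⟩, hgd⟩ := IsLocalization.surj (nonZeroDivisors (𝓞 K)) (α ^ M - 1)
  simp only at hgd
  have hg0 : g ≠ 0 := by
    rintro rfl
    rw [map_zero] at hgd
    rcases mul_eq_zero.mp hgd with h | h
    · exact hβ h
    · exact nonZeroDivisors.ne_zero d.2 (iotainj (by simpa using h))
  refine ⟨Ideal.absNorm (Ideal.span {g}), ?_⟩
  intro p hp hB _hsq hprime 𝔭 h𝔭 hp𝔭 hFrob ζ hζ hcong
  haveI : Nontrivial (𝓞 K ⧸ 𝔭) := Ideal.Quotient.nontrivial_iff.mpr h𝔭.ne_top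
  obtain ⟨a, b, hua, hub, hab⟩ := hprime
  have hle : Ideal.span {(p : 𝓞 K)} ≤ 𝔭 := (Ideal.span_singleton_le_iff_mem _).mpr hp𝔭
  have hua' : IsUnit (Ideal.Quotient.mk 𝔭 a) := by
    have := hua.map (Ideal.Quotient.factor hle)
    rwa [Ideal.Quotient.factor_mk] at this
  have hub' : IsUnit (Ideal.Quotient.mk 𝔭 b) := by
    have := hub.map (Ideal.Quotient.factor hle)
    rwa [Ideal.Quotient.factor_mk] at this
  set w : (𝓞 K ⧸ 𝔭)ˣ := hua'.unit * hub'.unit⁻¹ with hw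
  have hredη : Red 𝔭 η ↑w := by
    refine ⟨a, b, hub', hab, ?_⟩
    rw [hw, Units.val_mul, mul_assoc, hub'.val_inv_mul, mul_one, hua'.unit_spec]
  -- Frobenius powers
  have hfrobi : ∀ i : ℕ, Red 𝔭 ((s ^ i : K ≃ₐ[ℚ] K) η) ↑(w ^ p ^ i) := by
    intro i
    induction i with
    | zero => simpa using hredη
    | succ i ih =>
      have h1 := red_frob hFrob ih
      have hs : (s ^ (i + 1) : K ≃ₐ[ℚ] K) η = s ((s ^ i : K ≃ₐ[ℚ] K) η) := by
        rw [pow_succ']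
        exact AlgEquiv.mul_apply _ _ _
      rw [hs, pow_succ, pow_mul]
      simpa [Units.val_pow_eq_pow_val] using h1
  have hz : Red 𝔭 (η ^ f.eval (p : ℤ)) ↑(w ^ f.eval (p : ℤ)) :=
    red_zpow h𝔭.ne_top w hredη _
  rw [congMod_iff_red] at hcong
  have huζ : (↑(w ^ f.eval (p : ℤ)) : 𝓞 K ⧸ 𝔭) = Ideal.Quotient.mk 𝔭 ζ :=
    red_unique hz hcong
  -- Red α (mk ζ)
  have hredα : Red 𝔭 α ↑(w ^ f.eval (p : ℤ)) := by
    have h1 : Red 𝔭 α ↑(∏ i ∈ f.support, (w ^ p ^ i) ^ f.coeff i) := by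
      rw [hαdef]
      have h2 := red_prod (𝔭 := 𝔭) f.support
        (fun i => ((s ^ i : K ≃ₐ[ℚ] K) η) ^ f.coeff i)
        (fun i => ↑((w ^ p ^ i) ^ f.coeff i))
        (fun i _ => red_zpow h𝔭.ne_top (w ^ p ^ i) (hfrobi i) (f.coeff i))
      simpa using h2
    have h3 : (∏ i ∈ f.support, (w ^ p ^ i) ^ f.coeff i) = w ^ f.eval (p : ℤ) := by
      have h4 : ∀ i ∈ f.support, (w ^ p ^ i) ^ f.coeff i = w ^ (f.coeff i * (p : ℤ) ^ i) := by
        intro i _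
        rw [← zpow_natCast w (p ^ i), ← zpow_mul, mul_comm]
        norm_cast
      rw [Finset.prod_congr rfl h4, prod_zpow_group]
      congr 1
      rw [Polynomial.eval_eq_sum, Polynomial.sum_def]
    rwa [h3] at h1
  rw [huζ] at hredα
  have hredαM : Red 𝔭 (α ^ M) 1 := by
    have h1 := red_pow hredα M
    rwa [← map_pow, zeta_pow_torsionOrder ζ hζ, map_one] at h1
  obtain ⟨A, Bb, hBb, hABb, hre⟩ := hredαM
  have hABmem : A - Bb ∈ 𝔭 := by
    have h1 : Ideal.Quotient.mk 𝔭 (A - Bb) = 0 := by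
      rw [map_sub, hre, one_mul, sub_self]
    exact Ideal.Quotient.eq_zero_iff_mem.mp h1
  have heq2 : (A - Bb) * d = g * Bb := by
    apply iotainj
    rw [map_mul, map_mul, map_sub, hABb, ← hgd]
    ring
  have hgmem : g ∈ 𝔭 := by
    have hmem : g * Bb ∈ 𝔭 := heq2 ▸ Ideal.mul_mem_right _ _ hABmem
    rcases h𝔭.mem_or_mem hmem with h | h
    · exact h
    · exfalso
      have h1 : Ideal.Quotient.mk 𝔭 Bb = 0 := Ideal.Quotient.eq_zero_iff_mem.mpr h
      rw [h1] at hBb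
      exact zero_ne_one (isUnit_zero_iff.mp hBb)
  -- norm contradiction
  have hd1 : Ideal.absNorm 𝔭 ∣ Ideal.absNorm (Ideal.span {g}) :=
    Ideal.absNorm_dvd_absNorm_of_le ((Ideal.span_singleton_le_iff_mem _).mpr hgmem)
  have hd2 : Ideal.absNorm 𝔭 ∣ Ideal.absNorm (Ideal.span {(p : 𝓞 K)}) :=
    Ideal.absNorm_dvd_absNorm_of_le hle
  have habs_ne1 : Ideal.absNorm 𝔭 ≠ 1 := fun h => h𝔭.ne_top (Ideal.absNorm_eq_one_iff.mp h)
  have hnormp : Ideal.absNorm (Ideal.span {(p : 𝓞 K)})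
      = p ^ (Fintype.card (Module.Free.ChooseBasisIndex ℤ (𝓞 K))) := by
    rw [Ideal.absNorm_span_singleton]
    have h1 : (p : 𝓞 K) = algebraMap ℤ (𝓞 K) (p : ℤ) := by
      simp
    rw [h1, Algebra.norm_algebraMap_of_basis (NumberField.RingOfIntegers.basis K)]
    rw [Int.natAbs_pow]
    simp
  have hpd : p ∣ Ideal.absNorm 𝔭 := by
    obtain ⟨k, hk, hke⟩ := (Nat.dvd_prime_pow hp).mp (hnormp ▸ hd2)
    rcases Nat.eq_zero_or_pos k with rfl | hkpos
    · exact absurd (by simpa using hke) habs_ne1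
    · rw [hke]
      exact dvd_pow_self p hkpos.ne'
  have hpB : p ∣ Ideal.absNorm (Ideal.span {g}) := hpd.trans hd1
  have hBpos : 0 < Ideal.absNorm (Ideal.span {g}) := by
    rcases Nat.eq_zero_or_pos (Ideal.absNorm (Ideal.span {g})) with h | h
    · exact absurd (Ideal.span_singleton_eq_bot.mp (Ideal.absNorm_eq_zero_iff.mp h)) hg0
    · exact h
  exact absurd (Nat.le_of_dvd hBpos hpB) (not_le.mpr hB)
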